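/- Let E be a second-countable topological graph. The collection 𝒞 = { Z(V) ⊆ ∂E : V ⊆ E^n Borel, n ∈ ℕ₀ } is a π-system (closed under finite intersections) which generates the Borel σ-algebra of the boundary path space ∂E. -/

import Mathlib

open MeasureTheory Set

namespace TopGraph

universe u
variable {V E : Type u} (r s : E → V)

/-- Composability of a tuple of edges: the source of each edge is the range of the next. -/
def Comp (n : ℕ) (a : Fin n → E) : Prop :=
  ∀ i j : Fin n, (j : ℕ) = (i : ℕ) + 1 → s (a i) = r (a j)

/-- The space `E^n` of paths of length `n`; `E^0` is the vertex space `V`. -/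
def PathN : ℕ → Type u
  | 0 => V
  | n + 1 => {a : Fin (n + 1) → E // Comp r s (n + 1) a}

/-- The space `E^∞` of infinite paths. -/
def PathInf : Type u := {a : ℕ → E // ∀ i : ℕ, s (a i) = r (a (i + 1))}

/-- The edges of a finite path. -/
def edgeOf : ∀ {n : ℕ}, PathN r s n → Fin n → E
  | 0, _, i => absurd i.isLt (by omega)
  | _ + 1, q, i => q.1 i

/-- The source of a finite path (for a vertex, the vertex itself). -/
def srcFin : ∀ {n : ℕ}, PathN r s n → V
  | 0, v => v
  | n + 1, q => s (q.1 ⟨n, Nat.lt_succ_self n⟩)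

/-- The range of a finite path (for a vertex, the vertex itself). -/
def rngFin : ∀ {n : ℕ}, PathN r s n → V
  | 0, v => v
  | n + 1, q => r (q.1 ⟨0, Nat.succ_pos n⟩)

/-- Truncation `a ↦ a(n)` of a finite path, with `a(0) = r(a)`. -/
def truncFin : ∀ {m n : ℕ}, n ≤ m → PathN r s m → PathN r s n
  | 0, 0, _, q => q
  | _ + 1, 0, _, q => r (q.1 ⟨0, Nat.succ_pos _⟩)
  | 0, _ + 1, h, _ => absurd h (by omega)
  | _ + 1, _ + 1, h, q =>
    ⟨fun i => q.1 (Fin.castLE h i), fun i j hij =>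
      q.2 (Fin.castLE h i) (Fin.castLE h j) (by simpa using hij)⟩

/-- Truncation `a ↦ a(n)` of an infinite path. -/
def truncInf (a : PathInf r s) : ∀ n : ℕ, PathN r s n
  | 0 => r (a.1 0)
  | n + 1 => ⟨fun i => a.1 i, fun i j hij => by
      show s (a.1 (i : ℕ)) = r (a.1 (j : ℕ))
      rw [hij]
      exact a.2 (i : ℕ)⟩

/-- The finite path space `E* = ⊔ₙ E^n`. -/
def FinPath : Type u := Σ n : ℕ, PathN r s n

/-- Truncation of a finite path, as a map of `E*`. -/
def ftrunc (p : FinPath r s) (k : ℕ) (h : k ≤ p.1) : FinPath r s :=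
  ⟨k, truncFin r s h p.2⟩

section Topology

variable [TopologicalSpace V] [TopologicalSpace E]

instance instTopPathN : ∀ n : ℕ, TopologicalSpace (PathN r s n)
  | 0 => (inferInstance : TopologicalSpace V)
  | n + 1 => (inferInstance : TopologicalSpace {a : Fin (n + 1) → E // Comp r s (n + 1) a})

noncomputable instance instMeasPathN (n : ℕ) : MeasurableSpace (PathN r s n) := borel _

instance instTopPathInf : TopologicalSpace (PathInf r s) :=
  (inferInstance : TopologicalSpace {a : ℕ → E // ∀ i : ℕ, s (a i) = r (a (i + 1))})

instance instTopFinPath : TopologicalSpace (FinPath r s) :=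
  (inferInstance : TopologicalSpace (Σ n : ℕ, PathN r s n))

/-- A vertex is regular if it has a relatively compact open neighborhood `U` with
`r⁻¹(cl U)` compact and `r(r⁻¹(U)) = U`. -/
def RegularVertex (v : V) : Prop :=
  ∃ U : Set V, IsOpen U ∧ v ∈ U ∧ IsCompact (closure U) ∧
    IsCompact (r ⁻¹' closure U) ∧ r '' (r ⁻¹' U) = U

/-- The carrier of the boundary path space: finite or infinite paths. -/
def BPathCarrier : Type u := FinPath r s ⊕ PathInf r s

/-- Length of a (possibly infinite) path, in `ℕ∞`. -/
def blen : BPathCarrier r s → ℕ∞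
  | .inl p => (p.1 : ℕ∞)
  | .inr _ => ⊤

/-- Truncation `a ↦ a(n)` of a boundary path, `n ≤ |a|`, valued in `E*`. -/
def btrunc : ∀ (x : BPathCarrier r s) (n : ℕ), (n : ℕ∞) ≤ blen r s x → FinPath r s
  | .inl p, n, h => ftrunc r s p n (by simpa [blen] using h)
  | .inr a, n, _ => ⟨n, truncInf r s a n⟩

/-- The boundary path space `∂E`: singular finite paths together with infinite paths. -/
def BPath : Type u :=
  {x : BPathCarrier r s //
    ∀ p : FinPath r s, x = Sum.inl p → ¬ RegularVertex r (srcFin r s p.2)}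

/-- The cylinder sets `Z(S) = {a ∈ ∂E : a(n) ∈ S for some n ≤ |a|}`. -/
def ZSet (S : Set (FinPath r s)) : Set (BPath r s) :=
  {x | ∃ (n : ℕ) (h : (n : ℕ∞) ≤ blen r s x.val), btrunc r s x.val n h ∈ S}

/-- The topology on `∂E` generated by the base `{Z(U) \ Z(K) : U open, K compact}`. -/
instance instTopBPath : TopologicalSpace (BPath r s) :=
  TopologicalSpace.generateFrom
    {A | ∃ (U K : Set (FinPath r s)), IsOpen U ∧ IsCompact K ∧
      A = ZSet r s U \ ZSet r s K}

noncomputable instance instMeasBPath : MeasurableSpace (BPath r s) := borel _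

end Topology

/-- The backwards shift on finite paths (acting as the identity on vertices). -/
def shiftF : FinPath r s → FinPath r s
  | ⟨0, v⟩ => ⟨0, v⟩
  | ⟨1, q⟩ => ⟨0, (s (q.1 ⟨0, Nat.one_pos⟩) : PathN r s 0)⟩
  | ⟨n + 2, q⟩ =>
    ⟨n + 1, ⟨fun i => q.1 i.succ, fun i j hij =>
      q.2 i.succ j.succ (by simp [Fin.val_succ, hij])⟩⟩

/-- The backwards shift on the boundary path carrier. -/
def shiftC : BPathCarrier r s → BPathCarrier r s
  | .inl p => .inl (shiftF r s p)
  | .inr a => .inr ⟨fun i => a.1 (i + 1), fun i => a.2 (i + 1)⟩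

section Vertex

variable [TopologicalSpace V] [TopologicalSpace E]

/-- The set of vertices `E⁰ ⊆ ∂E`. -/
def VtxSet : Set (BPath r s) := {x | ∃ v : V, x.val = Sum.inl ⟨0, (v : PathN r s 0)⟩}

/-- The range map `r : ∂E → E⁰`. -/
def brng (x : BPath r s) : V :=
  match x.val with
  | .inl p => rngFin r s p.2
  | .inr a => r (a.1 0)

end Vertex

section Measures

variable [TopologicalSpace V] [TopologicalSpace E]
variable [MeasurableSpace V] [MeasurableSpace E]

/-- `ν` is the (sheaf-theoretic) pullback of `μ` along `f`. -/
def IsPullback {X Y : Type*} [TopologicalSpace X] [TopologicalSpace Y]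
    [MeasurableSpace X] [MeasurableSpace Y] (f : X → Y)
    (ν : Measure X) (μ : Measure Y) : Prop :=
  ∀ U : Set X, IsOpen U → Set.InjOn f U →
    ∀ B : Set X, B ⊆ U → MeasurableSet B → ν B = μ (f '' B)

/-- A measure `ν` on `∂E` is `β`-quasi-invariant: `σ*ν = e^β ν` on `∂E \ E⁰`, i.e.
`ν(B) = e^{-β} ν(σ(B))` for Borel `B` inside an open set `U ⊆ ∂E \ E⁰` on which `σ`
is injective. -/
def QuasiInv (β : ℝ) (ν : Measure (BPath r s)) : Prop :=
  ∀ U : Set (BPath r s), IsOpen U → Disjoint U (VtxSet r s) →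
    Set.InjOn (fun x : BPath r s => shiftC r s x.val) U →
    ∀ B : Set (BPath r s), B ⊆ U → MeasurableSet B →
      ν B = ENNReal.ofReal (Real.exp (-β)) *
        ν (Subtype.val ⁻¹' (shiftC r s '' (Subtype.val '' B)))

/-- A regular Borel measure `μ` on `E⁰` is `β`-sub-invariant: `Tμ ≤ e^β μ` with equality on
the regular vertices, where `T = r_* s*`. -/
def SubInv (β : ℝ) (μ : Measure V) : Prop :=
  μ.Regular ∧ ∃ sμ : Measure E, sμ.Regular ∧ IsPullback s sμ μ ∧
    Measure.map r sμ ≤ ENNReal.ofReal (Real.exp β) • μ ∧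
    ∀ B : Set V, MeasurableSet B → (∀ v ∈ B, RegularVertex r v) →
      Measure.map r sμ B = ENNReal.ofReal (Real.exp β) * μ B

end Measures

section BPathN

variable [TopologicalSpace V] [TopologicalSpace E]

/-- The `n`-th boundary path space `∂Eₙ = E⁰_sng ⊔ ⋯ ⊔ E^{n-1}_sng ⊔ E^n`. -/
def BPathN (n : ℕ) : Type u :=
  {p : FinPath r s // p.1 ≤ n ∧ (p.1 < n → ¬ RegularVertex r (srcFin r s p.2))}

/-- Cylinder sets in `∂Eₙ`. -/
def ZNSet (n : ℕ) (S : Set (FinPath r s)) : Set (BPathN r s n) :=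
  {x | ∃ (k : ℕ) (h : k ≤ x.val.1), ftrunc r s x.val k h ∈ S}

instance instTopBPathN (n : ℕ) : TopologicalSpace (BPathN r s n) :=
  TopologicalSpace.generateFrom
    {A | ∃ (U K : Set (FinPath r s)), IsOpen U ∧ IsCompact K ∧
      A = ZNSet r s n U \ ZNSet r s n K}

noncomputable instance instMeasBPathN (n : ℕ) : MeasurableSpace (BPathN r s n) := borel _

/-- The map `ρₙ : ∂Eₙ₊₁ → ∂Eₙ`, truncating paths of length `n+1` and fixing shorter paths. -/
def rho (n : ℕ) (x : BPathN r s (n + 1)) : BPathN r s n :=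
  if h : x.val.1 = n + 1 then
    ⟨ftrunc r s x.val n (by omega), ⟨le_refl n, fun hlt => absurd hlt (lt_irrefl n)⟩⟩
  else
    ⟨x.val, ⟨by have := x.property.1; omega, fun hlt => x.property.2 (by omega)⟩⟩

end BPathN

/-- The periodicity group of a boundary path. -/
def Per (x : BPathCarrier r s) : Set ℤ :=
  {z | ∃ k l : ℕ, (k : ℕ∞) ≤ blen r s x ∧ (l : ℕ∞) ≤ blen r s x ∧
    z = (k : ℤ) - (l : ℤ) ∧ (shiftC r s)^[k] x = (shiftC r s)^[l] x}

section Gpd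

variable [TopologicalSpace V] [TopologicalSpace E]

/-- The graph groupoid `𝒢_E`, as a set of triples. -/
def GraphGpd : Set (BPath r s × ℤ × BPath r s) :=
  {t | ∃ k l : ℕ, (k : ℕ∞) ≤ blen r s t.1.val ∧ (l : ℕ∞) ≤ blen r s t.2.2.val ∧
    t.2.1 = (k : ℤ) - (l : ℤ) ∧ (shiftC r s)^[k] t.1.val = (shiftC r s)^[l] t.2.2.val}

end Gpd

/-- The infinite path `c^∞` obtained by repeating a cycle `c`. -/
def cycInf {m : ℕ} (c : PathN r s (m + 1)) (hc : rngFin r s c = srcFin r s c) :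
    PathInf r s :=
  ⟨fun i => c.1 ⟨i % (m + 1), Nat.mod_lt i (Nat.succ_pos m)⟩, by
    intro i
    have hlt : i % (m + 1) < m + 1 := Nat.mod_lt i (Nat.succ_pos m)
    show s (c.1 ⟨i % (m + 1), Nat.mod_lt i (Nat.succ_pos m)⟩) =
      r (c.1 ⟨(i + 1) % (m + 1), Nat.mod_lt (i + 1) (Nat.succ_pos m)⟩)
    by_cases h1 : i % (m + 1) < m
    · have key : (i + 1) % (m + 1) = i % (m + 1) + 1 := by
        conv_lhs => rw [← Nat.div_add_mod i (m + 1)]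
        rw [Nat.add_assoc, Nat.mul_add_mod, Nat.mod_eq_of_lt (by omega)]
      exact c.2 _ _ key
    · have h2 : i % (m + 1) = m := by omega
      have key : (i + 1) % (m + 1) = 0 := by
        conv_lhs => rw [← Nat.div_add_mod i (m + 1)]
        rw [Nat.add_assoc, Nat.mul_add_mod, h2, Nat.mod_self]
      have e1 : (⟨i % (m + 1), Nat.mod_lt i (Nat.succ_pos m)⟩ : Fin (m + 1)) =
          ⟨m, Nat.lt_succ_self m⟩ := Fin.ext h2
      have e2 : (⟨(i + 1) % (m + 1), Nat.mod_lt (i + 1) (Nat.succ_pos m)⟩ : Fin (m + 1)) =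
          ⟨0, Nat.succ_pos m⟩ := Fin.ext key
      rw [e1, e2]
      exact hc.symm⟩

/-- Prepending a finite path `b` to an infinite path `d` with `s(b) = r(d)`. -/
def prepend : ∀ {n : ℕ} (b : PathN r s n) (d : PathInf r s),
    srcFin r s b = r (d.1 0) → PathInf r s
  | 0, _, d, _ => d
  | n + 1, b, d, h =>
    ⟨fun i => if h' : i < n + 1 then b.1 ⟨i, h'⟩ else d.1 (i - (n + 1)), by
      intro i
      show s (if h' : i < n + 1 then b.1 ⟨i, h'⟩ else d.1 (i - (n + 1))) =
        r (if h' : i + 1 < n + 1 then b.1 ⟨i + 1, h'⟩ else d.1 (i + 1 - (n + 1)))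
      by_cases h1 : i + 1 < n + 1
      · rw [dif_pos (by omega : i < n + 1), dif_pos h1]
        exact b.2 ⟨i, by omega⟩ ⟨i + 1, h1⟩ rfl
      · by_cases h2 : i < n + 1
        · rw [dif_pos h2, dif_neg h1]
          have hi : i = n := by omega
          have h0 : i + 1 - (n + 1) = 0 := by omega
          have e : (⟨i, h2⟩ : Fin (n + 1)) = ⟨n, Nat.lt_succ_self n⟩ := Fin.ext hi
          rw [h0, e]
          exact h
        · rw [dif_neg h2, dif_neg h1]
          have h3 : i + 1 - (n + 1) = (i - (n + 1)) + 1 := by omega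
          rw [h3]
          exact d.2 (i - (n + 1))⟩

/-- `b` ends with `c`: `b = a·c` for some finite path `a`. -/
def EndsWith {n m : ℕ} (b : PathN r s n) (c : PathN r s m) : Prop :=
  ∃ h : m ≤ n, ∀ i : Fin m,
    edgeOf r s b ⟨n - m + (i : ℕ), by have := i.isLt; omega⟩ = edgeOf r s c i

/-- `x` is eventually cyclic with cycle of length `m + 1`: `x = b c^∞` for a cycle `c` of
length `m+1` and an exit `b` of `c`. -/
def EvCyclicWitness (x : BPathCarrier r s) (m : ℕ) : Prop :=
  ∃ (c : PathN r s (m + 1)) (hc : rngFin r s c = srcFin r s c)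
    (k : ℕ) (b : PathN r s k)
    (hlink : srcFin r s b = r ((cycInf r s c hc).1 0)),
    srcFin r s b = rngFin r s c ∧ ¬ EndsWith r s b c ∧
    x = Sum.inr (prepend r s b (cycInf r s c hc) hlink)


section Stmt10Aux

open TopologicalSpace

variable {V E : Type u} (r s : E → V) [TopologicalSpace V] [TopologicalSpace E]

instance instT2PathN [T2Space V] [T2Space E] (n : ℕ) : T2Space (PathN r s n) := by
  cases n with
  | zero => exact (inferInstance : T2Space V)
  | succ n => exact (inferInstance : T2Space {a : Fin (n + 1) → E // Comp r s (n + 1) a})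

instance instSCPathN [SecondCountableTopology V] [SecondCountableTopology E] (n : ℕ) :
    SecondCountableTopology (PathN r s n) := by
  cases n with
  | zero => exact (inferInstance : SecondCountableTopology V)
  | succ n =>
      exact secondCountableTopology_induced _ _ (Subtype.val :
        {a : Fin (n + 1) → E // Comp r s (n + 1) a} → Fin (n + 1) → E)

theorem isClosed_comp [T2Space V] (hr : Continuous r) (hs : Continuous s) (n : ℕ) :
    IsClosed {a : Fin (n + 1) → E | Comp r s (n + 1) a} := by
  have : {a : Fin (n + 1) → E | Comp r s (n + 1) a} =
      ⋂ (i : Fin (n + 1)) (j : Fin (n + 1)),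
        {a : Fin (n + 1) → E | (j : ℕ) = (i : ℕ) + 1 → s (a i) = r (a j)} := by
    ext a; simp [Comp, Set.mem_iInter]
  rw [this]
  refine isClosed_iInter fun i => isClosed_iInter fun j => ?_
  by_cases hij : (j : ℕ) = (i : ℕ) + 1
  · have : {a : Fin (n + 1) → E | (j : ℕ) = (i : ℕ) + 1 → s (a i) = r (a j)} =
        {a : Fin (n + 1) → E | s (a i) = r (a j)} := by
      ext a; simp [hij]
    rw [this]
    exact isClosed_eq (hs.comp (continuous_apply i)) (hr.comp (continuous_apply j))
  · have : {a : Fin (n + 1) → E | (j : ℕ) = (i : ℕ) + 1 → s (a i) = r (a j)} = Set.univ := by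
      ext a; simp [hij]
    rw [this]; exact isClosed_univ

theorem locallyCompact_pathN [T2Space V] [T2Space E] [LocallyCompactSpace V] [LocallyCompactSpace E]
    (hr : Continuous r) (hs : Continuous s) (n : ℕ) : LocallyCompactSpace (PathN r s n) := by
  cases n with
  | zero => exact (inferInstance : LocallyCompactSpace V)
  | succ n =>
      exact ((isClosed_comp r s hr hs n).isClosedEmbedding_subtypeVal).locallyCompactSpace

theorem continuous_truncFin (hr : Continuous r) :
    ∀ {m n : ℕ} (h : n ≤ m), Continuous (truncFin r s h : PathN r s m → PathN r s n)
  | 0, 0, _ => continuous_id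
  | m + 1, 0, _ => hr.comp ((continuous_apply _).comp continuous_subtype_val)
  | 0, n + 1, h => absurd h (by omega)
  | m + 1, n + 1, h => by
      refine continuous_induced_rng.mpr ?_
      show Continuous fun q : PathN r s (m + 1) => fun i : Fin (n + 1) => q.1 (Fin.castLE h i)
      exact continuous_pi fun i => (continuous_apply (Fin.castLE h i)).comp continuous_subtype_val

theorem truncFin_trans : ∀ {m n k : ℕ} (h1 : k ≤ n) (h2 : n ≤ m) (q : PathN r s m),
    truncFin r s h1 (truncFin r s h2 q) = truncFin r s (h1.trans h2) q
  | 0, 0, 0, _, _, _ => rfl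
  | m + 1, 0, 0, _, _, _ => rfl
  | m + 1, n + 1, 0, _, _, _ => rfl
  | m + 1, n + 1, k + 1, _, _, _ => rfl
  | 0, n + 1, _, _, h2, _ => absurd h2 (by omega)
  | _, 0, k + 1, h1, _, _ => absurd h1 (by omega)

end Stmt10Aux
set_option linter.unusedSectionVars false

section Stmt10Aux2

open TopologicalSpace

variable {V E : Type u} (r s : E → V) [TopologicalSpace V] [TopologicalSpace E]

/-- Uniform truncation of a boundary-path carrier. -/
def trb : ∀ (x : BPathCarrier r s) (n : ℕ), (n : ℕ∞) ≤ blen r s x → PathN r s n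
  | .inl p, n, h => truncFin r s (Nat.cast_le.mp h) p.2
  | .inr a, n, _ => truncInf r s a n

theorem btrunc_eq (x : BPathCarrier r s) (n : ℕ) (h : (n : ℕ∞) ≤ blen r s x) :
    btrunc r s x n h = ⟨n, trb r s x n h⟩ := by cases x <;> rfl

theorem truncFin_truncInf (a : PathInf r s) :
    ∀ {n k : ℕ} (hkn : k ≤ n), truncFin r s hkn (truncInf r s a n) = truncInf r s a k
  | 0, 0, _ => rfl
  | n + 1, 0, _ => rfl
  | n + 1, k + 1, h => by
      apply Subtype.ext
      rfl
  | 0, k + 1, h => absurd h (by omega)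

theorem trb_trans (x : BPathCarrier r s) {k n : ℕ} (hkn : k ≤ n)
    (h' : (k : ℕ∞) ≤ blen r s x) (h : (n : ℕ∞) ≤ blen r s x) :
    trb r s x k h' = truncFin r s hkn (trb r s x n h) := by
  cases x with
  | inl p => exact (truncFin_trans r s hkn (Nat.cast_le.mp h) p.2).symm
  | inr a => exact (truncFin_truncInf r s a hkn).symm

theorem mem_ZSet_mk_iff {n : ℕ} {B : Set (PathN r s n)} {x : BPath r s} :
    x ∈ ZSet r s (Sigma.mk n '' B) ↔
      ∃ h : (n : ℕ∞) ≤ blen r s x.val, trb r s x.val n h ∈ B := by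
  constructor
  · rintro ⟨k, h, hmem⟩
    rw [btrunc_eq] at hmem
    obtain ⟨b, hb, heq⟩ := hmem
    obtain rfl : n = k := congrArg Sigma.fst heq
    obtain rfl : b = trb r s x.val n h := sigma_mk_injective heq
    exact ⟨h, hb⟩
  · rintro ⟨h, hb⟩
    exact ⟨n, h, by rw [btrunc_eq]; exact ⟨_, hb, rfl⟩⟩

theorem ZSet_mono {S T : Set (FinPath r s)} (h : S ⊆ T) : ZSet r s S ⊆ ZSet r s T :=
  fun _ ⟨n, hn, hmem⟩ => ⟨n, hn, h hmem⟩

theorem ZSet_empty : ZSet r s (∅ : Set (FinPath r s)) = ∅ := by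
  ext x; simp [ZSet]

theorem ZSet_iUnion {ι : Sort*} (S : ι → Set (FinPath r s)) :
    ZSet r s (⋃ i, S i) = ⋃ i, ZSet r s (S i) := by
  ext x
  constructor
  · rintro ⟨n, h, hmem⟩
    obtain ⟨i, hi⟩ := Set.mem_iUnion.mp hmem
    exact Set.mem_iUnion.mpr ⟨i, n, h, hi⟩
  · rintro h
    obtain ⟨i, n, hn, hmem⟩ := Set.mem_iUnion.mp h
    exact ⟨n, hn, Set.mem_iUnion.mpr ⟨i, hmem⟩⟩

theorem ZSet_union (S T : Set (FinPath r s)) :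
    ZSet r s (S ∪ T) = ZSet r s S ∪ ZSet r s T := by
  ext x
  constructor
  · rintro ⟨n, h, hmem⟩
    rcases hmem with hm | hm
    · exact Or.inl ⟨n, h, hm⟩
    · exact Or.inr ⟨n, h, hm⟩
  · rintro (⟨n, h, hm⟩ | ⟨n, h, hm⟩)
    · exact ⟨n, h, Or.inl hm⟩
    · exact ⟨n, h, Or.inr hm⟩

theorem isOpen_ZSet {U : Set (FinPath r s)} (hU : IsOpen U) : IsOpen (ZSet r s U) := by
  have : ZSet r s U = ZSet r s U \ ZSet r s (∅ : Set (FinPath r s)) := by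
    rw [ZSet_empty]; simp
  rw [this]
  exact TopologicalSpace.GenerateOpen.basic _ ⟨U, ∅, hU, isCompact_empty, rfl⟩

/-- Decomposition of a cylinder set by levels. -/
theorem ZSet_decomp (S : Set (FinPath r s)) :
    ZSet r s S = ⋃ n : ℕ, ZSet r s (Sigma.mk n '' (Sigma.mk n ⁻¹' S)) := by
  ext x
  constructor
  · rintro ⟨n, h, hmem⟩
    rw [btrunc_eq] at hmem
    refine Set.mem_iUnion.mpr ⟨n, ?_⟩
    exact mem_ZSet_mk_iff r s |>.mpr ⟨h, hmem⟩
  · intro hx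
    obtain ⟨n, hn⟩ := Set.mem_iUnion.mp hx
    obtain ⟨h, hmem⟩ := (mem_ZSet_mk_iff r s).mp hn
    exact ⟨n, h, by rw [btrunc_eq]; exact hmem⟩

theorem ZSet_compl (n : ℕ) (B : Set (PathN r s n)) :
    ZSet r s (Sigma.mk n '' Bᶜ) =
      ZSet r s (Sigma.mk n '' (Set.univ : Set (PathN r s n))) \ ZSet r s (Sigma.mk n '' B) := by
  ext x
  simp only [Set.mem_diff, mem_ZSet_mk_iff]
  constructor
  · rintro ⟨h, hb⟩
    exact ⟨⟨h, trivial⟩, fun ⟨h', hb'⟩ => hb hb'⟩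
  · rintro ⟨⟨h, -⟩, hn⟩
    exact ⟨h, fun hb => hn ⟨h, hb⟩⟩

theorem ZSet_mk_iUnion (n : ℕ) (f : ℕ → Set (PathN r s n)) :
    ZSet r s (Sigma.mk n '' ⋃ i, f i) = ⋃ i, ZSet r s (Sigma.mk n '' f i) := by
  exact (congrArg (ZSet r s) Set.image_iUnion).trans (ZSet_iUnion r s _)

/-- Intersection of cylinder sets over two levels. -/
theorem ZSet_mk_inter {n m : ℕ} (hnm : n ≤ m) (B : Set (PathN r s n)) (C : Set (PathN r s m)) :
    ZSet r s (Sigma.mk n '' B) ∩ ZSet r s (Sigma.mk m '' C) =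
      ZSet r s (Sigma.mk m '' (truncFin r s hnm ⁻¹' B ∩ C)) := by
  ext x
  simp only [Set.mem_inter_iff, mem_ZSet_mk_iff]
  constructor
  · rintro ⟨⟨h1, hB⟩, ⟨h2, hC⟩⟩
    refine ⟨h2, ?_, hC⟩
    show truncFin r s hnm (trb r s x.val m h2) ∈ B
    rw [← trb_trans r s x.val hnm h1 h2]
    exact hB
  · rintro ⟨h2, hB, hC⟩
    have h1 : (n : ℕ∞) ≤ blen r s x.val :=
      le_trans (by exact_mod_cast hnm) h2
    refine ⟨⟨h1, ?_⟩, ⟨h2, hC⟩⟩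
    rw [trb_trans r s x.val hnm h1 h2]
    exact hB

end Stmt10Aux2
section Stmt10Aux3

open TopologicalSpace

variable {V E : Type u} (r s : E → V) [TopologicalSpace V] [TopologicalSpace E]

instance instT2FinPath [T2Space V] [T2Space E] : T2Space (FinPath r s) :=
  (inferInstance : T2Space (Σ n, PathN r s n))

instance instSCFinPath [SecondCountableTopology V] [SecondCountableTopology E] :
    SecondCountableTopology (FinPath r s) :=
  (inferInstance : SecondCountableTopology (Σ n, PathN r s n))

instance instBorelPathN (n : ℕ) : BorelSpace (PathN r s n) := ⟨rfl⟩

instance instBorelBPath : BorelSpace (BPath r s) := ⟨rfl⟩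

theorem locallyCompact_finPath [T2Space V] [T2Space E] [LocallyCompactSpace V]
    [LocallyCompactSpace E] (hr : Continuous r) (hs : Continuous s) :
    LocallyCompactSpace (FinPath r s) := by
  haveI : ∀ n, LocallyCompactSpace (PathN r s n) := locallyCompact_pathN r s hr hs
  constructor
  rintro ⟨n, q⟩ N hN
  have hmap : Filter.map (Sigma.mk n) (nhds q) = nhds (⟨n, q⟩ : FinPath r s) :=
    (Topology.IsOpenEmbedding.sigmaMk (i := n)).map_nhds_eq q
  have hN' : Sigma.mk n ⁻¹' N ∈ nhds q := by
    exact hmap.le hN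
  obtain ⟨C, hCn, hCN, hCc⟩ := LocallyCompactSpace.local_compact_nhds q _ hN'
  refine ⟨Sigma.mk n '' C, ?_, ?_, hCc.image continuous_sigmaMk⟩
  · refine hmap.ge ?_
    exact Filter.image_mem_map hCn
  · rintro p ⟨c, hc, rfl⟩
    exact hCN hc

theorem level_bound {K : Set (FinPath r s)} (hK : IsCompact K) :
    ∃ N : ℕ, ∀ p ∈ K, p.1 ≤ N := by
  have hcov : K ⊆ ⋃ n : ℕ, Set.range (Sigma.mk n) := by
    rintro ⟨n, q⟩ _
    exact Set.mem_iUnion.mpr ⟨n, q, rfl⟩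
  obtain ⟨t, ht⟩ := hK.elim_finite_subcover (fun n : ℕ => Set.range (Sigma.mk n))
    (fun n => isOpen_range_sigmaMk) hcov
  refine ⟨t.sup id, fun p hp => ?_⟩
  obtain ⟨n, hn, q, hq⟩ := Set.mem_iUnion₂.mp (ht hp)
  have : p.1 = n := by rw [← hq]
  rw [this]
  exact Finset.le_sup (f := id) hn

/-- In a LCH space with basis `B0`, find a basic neighborhood with compact closure inside
an open set and inside the sigma-component. -/
theorem key_nbhd [T2Space V] [T2Space E] [LocallyCompactSpace V] [LocallyCompactSpace E]
    (hr : Continuous r) (hs : Continuous s) {B0 : Set (Set (FinPath r s))}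
    (hB0 : IsTopologicalBasis B0) (p : FinPath r s) {O : Set (FinPath r s)}
    (hO : IsOpen O) (hp : p ∈ O) :
    ∃ W ∈ B0, p ∈ W ∧ IsCompact (closure W) ∧ closure W ⊆ O ∧
      closure W ⊆ Set.range (Sigma.mk p.1) := by
  haveI := locallyCompact_finPath r s hr hs
  have hO2 : IsOpen (O ∩ Set.range (Sigma.mk p.1)) := hO.inter isOpen_range_sigmaMk
  have hp2 : p ∈ O ∩ Set.range (Sigma.mk p.1) := ⟨hp, p.2, by cases p; rfl⟩
  obtain ⟨C, hCn, hCO, hCc⟩ :=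
    LocallyCompactSpace.local_compact_nhds p _ (hO2.mem_nhds hp2)
  have hpint : p ∈ interior C := mem_interior_iff_mem_nhds.mpr hCn
  obtain ⟨W, hWB, hpW, hWint⟩ := hB0.exists_subset_of_mem_open hpint isOpen_interior
  have hclW : closure W ⊆ C :=
    (closure_mono hWint).trans (closure_minimal interior_subset hCc.isClosed)
  exact ⟨W, hWB, hpW, hCc.of_isClosed_subset isClosed_closure hclW,
    hclW.trans (hCO.trans Set.inter_subset_left),
    hclW.trans (hCO.trans Set.inter_subset_right)⟩

end Stmt10Aux3
section Stmt10Aux4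

open TopologicalSpace

variable {V E : Type u} (r s : E → V) [TopologicalSpace V] [TopologicalSpace E]

theorem secondCountable_BPath [T2Space V] [T2Space E] [LocallyCompactSpace V]
    [LocallyCompactSpace E] [SecondCountableTopology V] [SecondCountableTopology E]
    (hr : Continuous r) (hs : Continuous s) : SecondCountableTopology (BPath r s) := by
  obtain ⟨B0, hB0c, -, hB0⟩ := exists_countable_basis (FinPath r s)
  set B1 : Set (Set (FinPath r s)) := {W ∈ B0 | IsCompact (closure W)} with hB1def
  have hB1c : B1.Countable := hB0c.mono (Set.sep_subset _ _)
  set KF : Set (Set (FinPath r s)) :=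
    (fun S : Set (Set (FinPath r s)) => ⋃ W ∈ S, closure W) '' {S | S.Finite ∧ S ⊆ B1}
    with hKFdef
  have hKFc : KF.Countable := (Set.countable_setOf_finite_subset hB1c).image _
  have hKFcpt : ∀ K ∈ KF, IsCompact K := by
    rintro K ⟨S, ⟨hfin, hsub⟩, rfl⟩
    exact hfin.isCompact_biUnion fun W hW => (hsub hW).2
  set b : Set (Set (BPath r s)) :=
    Set.image2 (fun U K => ZSet r s U \ ZSet r s K) B0 KF with hbdef
  have hbc : b.Countable := hB0c.image2 hKFc _
  refine ⟨⟨b, hbc, ?_⟩⟩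
  apply le_antisymm
  · rw [le_generateFrom_iff_subset_isOpen]
    rintro A ⟨U, hU, K, hK, rfl⟩
    exact TopologicalSpace.GenerateOpen.basic _ ⟨U, K, hB0.isOpen hU, hKFcpt K hK, rfl⟩
  · have : (instTopBPath r s : TopologicalSpace (BPath r s)) =
        generateFrom {A | ∃ (U K : Set (FinPath r s)), IsOpen U ∧ IsCompact K ∧
          A = ZSet r s U \ ZSet r s K} := rfl
    rw [this, le_generateFrom_iff_subset_isOpen]
    rintro A ⟨U, K, hU, hK, rfl⟩
    -- pointwise: each point of Z(U) \ Z(K) has a basic `b`-neighborhood inside it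
    have key : ∀ x ∈ ZSet r s U \ ZSet r s K,
        ∃ W ∈ b, x ∈ W ∧ W ⊆ ZSet r s U \ ZSet r s K := by
      rintro x ⟨hxU, hxK⟩
      obtain ⟨n, hn, hmem⟩ := hxU
      obtain ⟨Vb, hVbB, hxVb, hVbU⟩ := hB0.exists_subset_of_mem_open hmem hU
      obtain ⟨N, hN⟩ := level_bound r s hK
      set F : Set (FinPath r s) := ⋃ m ∈ Set.Iic N,
        {q | ∃ h : (m : ℕ∞) ≤ blen r s x.val, q = btrunc r s x.val m h} with hFdef
      have hFfin : F.Finite := by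
        refine (Set.finite_Iic N).biUnion fun m _ => Set.Subsingleton.finite ?_
        rintro q ⟨h1, rfl⟩ q' ⟨h2, rfl⟩
        rfl
      have hFK : ∀ p ∈ K, p ∈ Fᶜ := by
        rintro p hp hpF
        obtain ⟨m, _, h, rfl⟩ := Set.mem_iUnion₂.mp hpF
        exact hxK ⟨m, h, hp⟩
      -- the index family
      set I : Set (Set (FinPath r s)) := {W ∈ B1 | closure W ⊆ Fᶜ ∧
        ∃ k : ℕ, k ≤ N ∧ closure W ⊆ Set.range (Sigma.mk k)} with hIdef
      have hcov : K ⊆ ⋃ W ∈ I, W := by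
        intro p hp
        obtain ⟨W, hWB, hpW, hWcpt, hWF, hWrange⟩ :=
          key_nbhd r s hr hs hB0 p (hFfin.isClosed.isOpen_compl) (hFK p hp)
        exact Set.mem_iUnion₂.mpr ⟨W, ⟨⟨hWB, hWcpt⟩, hWF, ⟨p.1, hN p hp, hWrange⟩⟩, hpW⟩
      obtain ⟨I', hI'I, hI'fin, hI'cov⟩ := hK.elim_finite_subcover_image
        (fun W (hW : W ∈ I) => hB0.isOpen hW.1.1) hcov
      set K' : Set (FinPath r s) := ⋃ W ∈ I', closure W with hK'def
      have hK'KF : K' ∈ KF := ⟨I', ⟨hI'fin, hI'I.trans (Set.sep_subset _ _)⟩, rfl⟩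
      have hKK' : K ⊆ K' := by
        intro p hp
        obtain ⟨W, hWI', hpW⟩ := Set.mem_iUnion₂.mp (hI'cov hp)
        exact Set.mem_iUnion₂.mpr ⟨W, hWI', subset_closure hpW⟩
      have hxK' : x ∉ ZSet r s K' := by
        rintro ⟨m, hm, hmem'⟩
        obtain ⟨W, hWI', hmemW⟩ := Set.mem_iUnion₂.mp hmem'
        obtain ⟨-, hWF, k, hkN, hWrange⟩ := hI'I hWI'
        obtain ⟨q, hq⟩ := hWrange hmemW
        have hmk : m = k := by
          have := congrArg Sigma.fst hq
          rw [btrunc_eq] at this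
          exact this.symm
        refine hWF hmemW ?_
        exact Set.mem_iUnion₂.mpr ⟨m, by simp [hmk, hkN], ⟨hm, rfl⟩⟩
      refine ⟨ZSet r s Vb \ ZSet r s K', ⟨Vb, hVbB, K', hK'KF, rfl⟩, ⟨⟨n, hn, hxVb⟩, hxK'⟩, ?_⟩
      exact Set.diff_subset_diff (ZSet_mono r s hVbU) (ZSet_mono r s hKK')
    have hAeq : ZSet r s U \ ZSet r s K =
        ⋃₀ {W | W ∈ b ∧ W ⊆ ZSet r s U \ ZSet r s K} := by
      apply subset_antisymm
      · intro x hx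
        obtain ⟨W, hWb, hxW, hWsub⟩ := key x hx
        exact ⟨W, ⟨hWb, hWsub⟩, hxW⟩
      · exact Set.sUnion_subset fun W hW => hW.2
    rw [hAeq]
    exact @isOpen_sUnion _ (generateFrom b) _
      fun W hW => TopologicalSpace.isOpen_generateFrom_of_mem hW.1

end Stmt10Aux4
/-- For a second-countable topological graph, the collection
`𝒞 = {Z(B) : B ⊆ E^n Borel, n ∈ ℕ}` is a π-system generating the Borel σ-algebra
of the boundary path space `∂E`. -/
theorem stmt10 {V E : Type u} (r s : E → V) [TopologicalSpace V] [TopologicalSpace E]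
    [T2Space V] [T2Space E] [LocallyCompactSpace V] [LocallyCompactSpace E]
    [SecondCountableTopology V] [SecondCountableTopology E]
    (hr : Continuous r) (hs : IsLocalHomeomorph s) :
    IsPiSystem {C : Set (BPath r s) | ∃ (n : ℕ) (B : Set (PathN r s n)),
      MeasurableSet B ∧ C = ZSet r s (Sigma.mk n '' B)} ∧
    MeasurableSpace.generateFrom {C : Set (BPath r s) | ∃ (n : ℕ) (B : Set (PathN r s n)),
      MeasurableSet B ∧ C = ZSet r s (Sigma.mk n '' B)} = borel (BPath r s) := by
  have hsc : Continuous s := hs.continuous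
  constructor
  · -- π-system
    rintro C1 ⟨n, B, hB, rfl⟩ C2 ⟨m, C, hC, rfl⟩ -
    rcases le_total n m with hnm | hmn
    · exact ⟨m, truncFin r s hnm ⁻¹' B ∩ C,
        ((continuous_truncFin r s hr hnm).measurable hB).inter hC, ZSet_mk_inter r s hnm B C⟩
    · rw [Set.inter_comm]
      exact ⟨n, truncFin r s hmn ⁻¹' C ∩ B,
        ((continuous_truncFin r s hr hmn).measurable hC).inter hB, ZSet_mk_inter r s hmn C B⟩
  · haveI := secondCountable_BPath r s hr hsc
    apply le_antisymm
    · apply MeasurableSpace.generateFrom_le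
      rintro C ⟨n, B, hB, rfl⟩
      refine MeasurableSet.induction_on_open
        (C := fun (B : Set (PathN r s n)) _ =>
          MeasurableSet[borel (BPath r s)] (ZSet r s (Sigma.mk n '' B))) ?_ ?_ ?_ _ hB
      · intro U hU
        exact (isOpen_ZSet r s (isOpenMap_sigmaMk U hU)).measurableSet
      · intro t _ hZt
        rw [ZSet_compl]
        exact ((isOpen_ZSet r s
          (isOpenMap_sigmaMk _ isOpen_univ)).measurableSet).diff hZt
      · intro f _ _ hZ
        rw [ZSet_mk_iUnion]
        exact MeasurableSet.iUnion hZ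
    · have hb : borel (BPath r s) = MeasurableSpace.generateFrom
          {A | ∃ (U K : Set (FinPath r s)), IsOpen U ∧ IsCompact K ∧
            A = ZSet r s U \ ZSet r s K} :=
        borel_eq_generateFrom_of_subbasis rfl
      rw [hb]
      apply MeasurableSpace.generateFrom_le
      rintro A ⟨U, K, hU, hK, rfl⟩
      have measZ : ∀ S : Set (FinPath r s), (∀ n, MeasurableSet (Sigma.mk n ⁻¹' S)) →
          MeasurableSet[MeasurableSpace.generateFrom
            {C : Set (BPath r s) | ∃ (n : ℕ) (B : Set (PathN r s n)),
              MeasurableSet B ∧ C = ZSet r s (Sigma.mk n '' B)}] (ZSet r s S) := by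
        intro S hS
        rw [ZSet_decomp]
        exact MeasurableSet.iUnion fun n =>
          MeasurableSpace.measurableSet_generateFrom ⟨n, Sigma.mk n ⁻¹' S, hS n, rfl⟩
      exact (measZ U fun n => (hU.preimage continuous_sigmaMk).measurableSet).diff
        (measZ K fun n => (hK.isClosed.preimage continuous_sigmaMk).measurableSet)

end TopGraph
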